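/- arXiv:1006.5652 — 2 statements merged into one kernel-verified Lean document; each statement's English description precedes it below -/
import Mathlib

section
/- (Gauss's binomial formula) For every q > 0, all complex numbers z and a, and every natural number n, one has ∏_{j=0}^{n-1} (z + a q^j) = ∑_{j=0}^{n} q^{j(j-1)/2} · ([n]_q! / ([j]_q! [n-j]_q!)) · a^j z^{n-j}. -/
/-- The q-integer `[k]_q = 1 + q + q^2 + ⋯ + q^(k-1)`. -/
noncomputable def qInt (q : ℝ) (k : ℕ) : ℝ := ∑ i ∈ Finset.range k, q ^ i

/-- The q-factorial `[n]_q! = [1]_q [2]_q ⋯ [n]_q`, with `[0]_q! = 1`. -/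
noncomputable def qFact (q : ℝ) (n : ℕ) : ℝ := ∏ k ∈ Finset.range n, qInt q (k + 1)

lemma qInt_pos {q : ℝ} (hq : 0 < q) (k : ℕ) : 0 < qInt q (k + 1) := by
  apply Finset.sum_pos (fun i _ => pow_pos hq i) Finset.nonempty_range_add_one

lemma qFact_pos {q : ℝ} (hq : 0 < q) (n : ℕ) : 0 < qFact q n :=
  Finset.prod_pos fun k _ => qInt_pos hq k

lemma qFact_succ (q : ℝ) (n : ℕ) : qFact q (n + 1) = qFact q n * qInt q (n + 1) :=
  Finset.prod_range_succ _ _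

lemma qInt_add (q : ℝ) (a b : ℕ) : qInt q (a + b) = qInt q b + q ^ b * qInt q a := by
  unfold qInt
  rw [add_comm a b, Finset.sum_range_add, Finset.mul_sum]
  simp [pow_add]

lemma pascal {q : ℝ} (hq : 0 < q) (k m : ℕ) :
    qFact q (k + m + 2) / (qFact q (k + 1) * qFact q (m + 1)) =
      qFact q (k + m + 1) / (qFact q (k + 1) * qFact q m) +
        q ^ (m + 1) * (qFact q (k + m + 1) / (qFact q k * qFact q (m + 1))) := by
  have h1 : qInt q (k + m + 2) = qInt q (m + 1) + q ^ (m + 1) * qInt q (k + 1) := by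
    have := qInt_add q (k + 1) (m + 1)
    rwa [show k + 1 + (m + 1) = k + m + 2 by ring] at this
  have hA := (qFact_pos hq k).ne'
  have hB := (qFact_pos hq m).ne'
  have hx := (qInt_pos hq k).ne'
  have hy := (qInt_pos hq m).ne'
  rw [show k + m + 2 = (k + m + 1) + 1 from rfl, qFact_succ, qFact_succ q k, qFact_succ q m, h1]
  field_simp

noncomputable def c (q : ℝ) (n j : ℕ) : ℂ :=
  (q : ℂ) ^ (j * (j - 1) / 2) * ((qFact q n : ℂ) / ((qFact q j : ℂ) * (qFact q (n - j) : ℂ)))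

lemma qFact_zero (q : ℝ) : qFact q 0 = 1 := by simp [qFact]

lemma c_zero {q : ℝ} (hq : 0 < q) (n : ℕ) : c q n 0 = 1 := by
  have h : (qFact q n : ℂ) ≠ 0 := by
    exact_mod_cast (qFact_pos hq n).ne'
  simp [c, qFact_zero, div_self h]

lemma qFact_zero' : True := trivial

lemma c_self {q : ℝ} (hq : 0 < q) (n : ℕ) : c q n n = (q : ℂ) ^ (n * (n - 1) / 2) := by
  have h : (qFact q n : ℂ) ≠ 0 := by
    exact_mod_cast (qFact_pos hq n).ne'
  simp [c, qFact_zero, div_self h]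

lemma half_succ (k : ℕ) : (k + 1) * k / 2 = k * (k - 1) / 2 + k := by
  rcases k with _ | k0
  · rfl
  · rw [Nat.succ_sub_one, show (k0 + 2) * (k0 + 1) = (k0 + 1) * k0 + (k0 + 1) * 2 by ring,
      Nat.add_mul_div_right _ _ (by norm_num : 0 < 2)]

lemma c_pascal {q : ℝ} (hq : 0 < q) {n k : ℕ} (hk : k < n) :
    c q (n + 1) (k + 1) = c q n (k + 1) + (q : ℂ) ^ n * c q n k := by
  obtain ⟨m, rfl⟩ : ∃ m, n = k + m + 1 := ⟨n - k - 1, by omega⟩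
  have hp := pascal hq k m
  have hp' : (qFact q (k + m + 2) / (qFact q (k + 1) * qFact q (m + 1)) : ℂ) =
      (qFact q (k + m + 1) / (qFact q (k + 1) * qFact q m) : ℂ) +
        (q : ℂ) ^ (m + 1) * ((qFact q (k + m + 1) : ℂ) / ((qFact q k : ℂ) * (qFact q (m + 1) : ℂ))) := by
    exact_mod_cast congrArg Complex.ofReal hp
  unfold c
  rw [show k + m + 1 + 1 = k + m + 2 from rfl,
    show k + m + 2 - (k + 1) = m + 1 by omega,
    show k + m + 1 - (k + 1) = m by omega,
    show k + m + 1 - k = m + 1 by omega,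
    show (k + 1) * (k + 1 - 1) / 2 = (k + 1) * k / 2 by rfl,
    hp', mul_add]
  congr 1
  rw [← mul_assoc, ← mul_assoc, ← pow_add, ← pow_add]
  congr 2
  have := half_succ k
  omega

lemma key {q : ℝ} (hq : 0 < q) (z a : ℂ) (n : ℕ) :
    (∑ j ∈ Finset.range (n + 1), c q n j * a ^ j * z ^ (n - j)) * (z + a * (q : ℂ) ^ n) =
      ∑ j ∈ Finset.range (n + 2), c q (n + 1) j * a ^ j * z ^ (n + 1 - j) := by
  have hR : ∑ j ∈ Finset.range (n + 2), c q (n + 1) j * a ^ j * z ^ (n + 1 - j)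
      = ((∑ k ∈ Finset.range n, c q n (k + 1) * a ^ (k + 1) * z ^ (n - k))
        + ∑ k ∈ Finset.range n, (q : ℂ) ^ n * (c q n k * a ^ (k + 1) * z ^ (n - k)))
        + ((q : ℂ) ^ n * ((q : ℂ) ^ (n * (n - 1) / 2) * a ^ (n + 1)) + z ^ (n + 1)) := by
    rw [Finset.sum_range_succ' (fun j => c q (n + 1) j * a ^ j * z ^ (n + 1 - j)) (n + 1),
      Finset.sum_range_succ]
    have hmid : ∑ k ∈ Finset.range n, c q (n + 1) (k + 1) * a ^ (k + 1) * z ^ (n + 1 - (k + 1))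
        = ∑ k ∈ Finset.range n, (c q n (k + 1) * a ^ (k + 1) * z ^ (n - k)
            + (q : ℂ) ^ n * (c q n k * a ^ (k + 1) * z ^ (n - k))) := by
      refine Finset.sum_congr rfl fun k hk => ?_
      have hkn := Finset.mem_range.mp hk
      rw [c_pascal hq hkn, show n + 1 - (k + 1) = n - k by omega]
      ring
    rw [hmid, Finset.sum_add_distrib, c_zero hq, c_self hq,
      show n + 1 - 1 = n from rfl, half_succ n, pow_add]
    simp only [pow_zero, one_mul, Nat.sub_self, mul_one, Nat.sub_zero]
    ring
  rw [hR, mul_add, Finset.sum_mul, Finset.sum_mul]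
  have h1 : ∑ j ∈ Finset.range (n + 1), c q n j * a ^ j * z ^ (n - j) * z
      = (∑ k ∈ Finset.range n, c q n (k + 1) * a ^ (k + 1) * z ^ (n - k)) + z ^ (n + 1) := by
    rw [Finset.sum_range_succ' (fun j => c q n j * a ^ j * z ^ (n - j) * z) n]
    congr 1
    · refine Finset.sum_congr rfl fun k hk => ?_
      have hkn := Finset.mem_range.mp hk
      rw [show n - (k + 1) = n - k - 1 by omega]
      rw [mul_assoc, mul_assoc, ← pow_succ, show n - k - 1 + 1 = n - k by omega]
      ring
    · simp [c_zero hq, pow_succ]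
  have h2 : ∑ j ∈ Finset.range (n + 1), c q n j * a ^ j * z ^ (n - j) * (a * (q : ℂ) ^ n)
      = (∑ k ∈ Finset.range n, (q : ℂ) ^ n * (c q n k * a ^ (k + 1) * z ^ (n - k)))
        + (q : ℂ) ^ n * ((q : ℂ) ^ (n * (n - 1) / 2) * a ^ (n + 1)) := by
    rw [Finset.sum_range_succ]
    congr 1
    · refine Finset.sum_congr rfl fun k hk => by ring
    · rw [c_self hq]
      simp [pow_succ]
      ring
  rw [h1, h2]
  ring

lemma gauss' {q : ℝ} (hq : 0 < q) (z a : ℂ) (n : ℕ) :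
    ∏ j ∈ Finset.range n, (z + a * (q : ℂ) ^ j) =
      ∑ j ∈ Finset.range (n + 1), c q n j * a ^ j * z ^ (n - j) := by
  induction n with
  | zero => simp [c_zero hq]
  | succ n ih => rw [Finset.prod_range_succ, ih, key hq]


/-- Gauss's binomial formula:
`∏_{j=0}^{n-1} (z + a q^j) = ∑_{j=0}^{n} q^(j(j-1)/2) ([n]_q!/([j]_q! [n-j]_q!)) a^j z^(n-j)`. -/
theorem gauss_binomial (q : ℝ) (hq : 0 < q) (z a : ℂ) (n : ℕ) :
    ∏ j ∈ Finset.range n, (z + a * (q : ℂ) ^ j) =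
      ∑ j ∈ Finset.range (n + 1),
        (q : ℂ) ^ (j * (j - 1) / 2) *
          ((qFact q n : ℂ) / ((qFact q j : ℂ) * (qFact q (n - j) : ℂ))) *
          a ^ j * z ^ (n - j) := by
  rw [gauss' hq]
  simp only [c, mul_assoc]
end

section
/- Let q > 0, q ≠ 1, and let R_q = 2/(1-q) if 0 < q < 1 and R_q = 2q/(q-1) if q > 1. Then for every complex number z with |z| < R_q, one has 𝓔_q(-z) · 𝓔_q(z) = 1, where 𝓔_q(z) = ∑_{n=0}^∞ z^n/{n}_q!. -/
/-- The symbol `{n}_q = 2(1-q^n)/((1-q)(1+q^(n-1)))` (for `n ≥ 1`). -/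
noncomputable def qBrace (q : ℝ) (n : ℕ) : ℝ :=
  2 * (1 - q ^ n) / ((1 - q) * (1 + q ^ (n - 1)))

/-- The factorial `{n}_q! = {1}_q {2}_q ⋯ {n}_q`, with `{0}_q! = 1`. -/
noncomputable def qBraceFact (q : ℝ) (n : ℕ) : ℝ := ∏ k ∈ Finset.range n, qBrace q (k + 1)

/-- The radius `R_q = 2/(1-q)` for `0 < q < 1` and `R_q = 2q/(q-1)` for `q > 1`. -/
noncomputable def Rq (q : ℝ) : ℝ := if q < 1 then 2 / (1 - q) else 2 * q / (q - 1)

/-- The improved q-exponential function `𝓔_q(z) = ∑_{n=0}^∞ z^n/{n}_q!`. -/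
noncomputable def impExp (q : ℝ) (z : ℂ) : ℂ := ∑' n : ℕ, z ^ n / (qBraceFact q n : ℂ)

open PowerSeries Filter Finset

section Aux

lemma qBraceFact_zero (q : ℝ) : qBraceFact q 0 = 1 := by simp [qBraceFact]

lemma qBraceFact_succ (q : ℝ) (n : ℕ) :
    qBraceFact q (n + 1) = qBraceFact q n * qBrace q (n + 1) := Finset.prod_range_succ _ _

lemma pow_succ_ne_one {q : ℝ} (hq : 0 < q) (hq1 : q ≠ 1) (n : ℕ) : q ^ (n + 1) ≠ 1 := by
  rcases hq1.lt_or_gt with h | h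
  · exact ne_of_lt (pow_lt_one₀ hq.le h n.succ_ne_zero)
  · exact ne_of_gt (one_lt_pow₀ h n.succ_ne_zero)

lemma qBrace_succ (q : ℝ) (n : ℕ) :
    qBrace q (n + 1) = 2 * (1 - q ^ (n + 1)) / ((1 - q) * (1 + q ^ n)) := by
  simp [qBrace]

lemma qBrace_ne_zero {q : ℝ} (hq : 0 < q) (hq1 : q ≠ 1) (n : ℕ) : qBrace q (n + 1) ≠ 0 := by
  rw [qBrace_succ]
  have h1 : (1 : ℝ) - q ^ (n + 1) ≠ 0 := sub_ne_zero.mpr (Ne.symm (pow_succ_ne_one hq hq1 n))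
  have h2 : (1 : ℝ) - q ≠ 0 := sub_ne_zero.mpr (Ne.symm hq1)
  have h3 : (0 : ℝ) < 1 + q ^ n := by positivity
  exact div_ne_zero (mul_ne_zero two_ne_zero h1) (mul_ne_zero h2 h3.ne')

lemma qBraceFact_ne_zero {q : ℝ} (hq : 0 < q) (hq1 : q ≠ 1) (n : ℕ) : qBraceFact q n ≠ 0 := by
  rw [qBraceFact]
  exact Finset.prod_ne_zero_iff.mpr fun k _ => qBrace_ne_zero hq hq1 k

lemma qBraceFact_rec {q : ℝ} (hq : 0 < q) (hq1 : q ≠ 1) (n : ℕ) :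
    (1 - q ^ (n + 1)) * (qBraceFact q (n + 1))⁻¹
      = (1 - q) / 2 * (1 + q ^ n) * (qBraceFact q n)⁻¹ := by
  have h1 : (1 : ℝ) - q ^ (n + 1) ≠ 0 := sub_ne_zero.mpr (Ne.symm (pow_succ_ne_one hq hq1 n))
  have h2 : (1 : ℝ) - q ≠ 0 := sub_ne_zero.mpr (Ne.symm hq1)
  have h3 : (0 : ℝ) < 1 + q ^ n := by positivity
  have h4 := qBraceFact_ne_zero hq hq1 n
  rw [qBraceFact_succ, qBrace_succ]
  field_simp

/-- The coefficient power series of `𝓔_q(z)`. -/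
noncomputable def psA (q : ℝ) : PowerSeries ℝ := PowerSeries.mk fun n => (qBraceFact q n)⁻¹

/-- The coefficient power series of `𝓔_q(-z)`. -/
noncomputable def psB (q : ℝ) : PowerSeries ℝ :=
  PowerSeries.mk fun n => (-1) ^ n * (qBraceFact q n)⁻¹

lemma funcA {q : ℝ} (hq : 0 < q) (hq1 : q ≠ 1) :
    (1 - C ((1 - q) / 2) * X) * psA q = (1 + C ((1 - q) / 2) * X) * rescale q (psA q) := by
  ext n
  rw [sub_mul, add_mul, one_mul, one_mul, map_sub, map_add, mul_assoc, mul_assoc]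
  cases n with
  | zero => simp [psA]
  | succ m =>
      rw [PowerSeries.coeff_C_mul, PowerSeries.coeff_C_mul,
        PowerSeries.coeff_succ_X_mul, PowerSeries.coeff_succ_X_mul]
      simp only [psA, coeff_mk, coeff_rescale]
      linear_combination qBraceFact_rec hq hq1 m

lemma funcB {q : ℝ} (hq : 0 < q) (hq1 : q ≠ 1) :
    (1 + C ((1 - q) / 2) * X) * psB q = (1 - C ((1 - q) / 2) * X) * rescale q (psB q) := by
  ext n
  rw [sub_mul, add_mul, one_mul, one_mul, map_sub, map_add, mul_assoc, mul_assoc]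
  cases n with
  | zero => simp [psB]
  | succ m =>
      rw [PowerSeries.coeff_C_mul, PowerSeries.coeff_C_mul,
        PowerSeries.coeff_succ_X_mul, PowerSeries.coeff_succ_X_mul]
      simp only [psB, coeff_mk, coeff_rescale]
      linear_combination ((-1 : ℝ) ^ (m + 1)) * qBraceFact_rec hq hq1 m

lemma G_rescale {q : ℝ} (hq : 0 < q) (hq1 : q ≠ 1) :
    psB q * psA q = rescale q (psB q * psA q) := by
  have h := congrArg₂ (· * ·) (funcB hq hq1) (funcA hq hq1)
  have hne : (1 - C ((1 - q) / 2) * X) * (1 + C ((1 - q) / 2) * X) ≠ 0 := by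
    intro hc
    have := congrArg (PowerSeries.constantCoeff) hc
    simp at this
  apply mul_left_cancel₀ hne
  rw [map_mul]
  linear_combination h

lemma key_coeff {q : ℝ} (hq : 0 < q) (hq1 : q ≠ 1) {n : ℕ} (hn : n ≠ 0) :
    ∑ kl ∈ Finset.HasAntidiagonal.antidiagonal n,
      ((-1 : ℝ) ^ kl.1 * (qBraceFact q kl.1)⁻¹) * (qBraceFact q kl.2)⁻¹ = 0 := by
  have h := congrArg (PowerSeries.coeff n) (G_rescale hq hq1)
  rw [coeff_rescale] at h
  obtain ⟨m, rfl⟩ := Nat.exists_eq_succ_of_ne_zero hn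
  simp only [Nat.succ_eq_add_one] at h
  have h0 : PowerSeries.coeff (m + 1) (psB q * psA q) = 0 := by
    have h2 : (1 - q ^ (m + 1)) * PowerSeries.coeff (m + 1) (psB q * psA q) = 0 := by
      linear_combination h
    rcases mul_eq_zero.mp h2 with h3 | h3
    · exact absurd (by linarith [sub_eq_zero.mp h3] : q ^ (m + 1) = 1) (pow_succ_ne_one hq hq1 m)
    · exact h3
  rw [PowerSeries.coeff_mul] at h0
  simpa [psA, psB, mul_assoc] using h0

lemma Rq_pos {q : ℝ} (hq : 0 < q) (hq1 : q ≠ 1) : 0 < Rq q := by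
  rcases hq1.lt_or_gt with h | h
  · rw [Rq, if_pos h]; exact div_pos two_pos (by linarith)
  · rw [Rq, if_neg (not_lt.mpr h.le)]
    apply div_pos (by linarith) (by linarith)

lemma Rq_inv {q : ℝ} (hq : 0 < q) (h : 1 < q) : Rq q⁻¹ = Rq q := by
  rw [Rq, Rq, if_pos (by rw [inv_lt_one_iff₀]; right; exact h), if_neg (not_lt.mpr h.le)]
  have h1 : q - 1 ≠ 0 := by linarith
  have h2 : 1 - q⁻¹ ≠ 0 := by
    have : q⁻¹ < 1 := by rw [inv_lt_one_iff₀]; right; exact h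
    linarith
  field_simp

lemma qBrace_inv {q : ℝ} (hq : 0 < q) (hq1 : q ≠ 1) (n : ℕ) :
    qBrace q⁻¹ (n + 1) = qBrace q (n + 1) := by
  have hq0 : q ≠ 0 := hq.ne'
  have d1 : 1 - q⁻¹ ≠ 0 := by
    intro h; apply hq1; field_simp at h; linarith
  have d2 : (0:ℝ) < 1 + (q ^ n)⁻¹ := by positivity
  have d3 : 1 - q ≠ 0 := sub_ne_zero.mpr (Ne.symm hq1)
  have d4 : (0:ℝ) < 1 + q ^ n := by positivity
  rw [qBrace_succ, qBrace_succ, inv_pow, inv_pow]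
  rw [div_eq_div_iff (mul_ne_zero d1 d2.ne') (mul_ne_zero d3 d4.ne')]
  have hpn : q ^ n ≠ 0 := pow_ne_zero _ hq0
  field_simp
  ring

lemma tendsto_qBrace_lt {q : ℝ} (hq : 0 < q) (h : q < 1) :
    Tendsto (fun n => qBrace q (n + 1)) atTop (nhds (2 / (1 - q))) := by
  have h1 : Tendsto (fun n : ℕ => q ^ n) atTop (nhds 0) :=
    tendsto_pow_atTop_nhds_zero_of_lt_one hq.le h
  have h1' : Tendsto (fun n : ℕ => q ^ (n + 1)) atTop (nhds 0) := by
    simpa [Function.comp_def] using h1.comp (tendsto_add_atTop_nat 1)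
  have num : Tendsto (fun n : ℕ => 2 * (1 - q ^ (n + 1))) atTop (nhds (2 * (1 - 0))) :=
    (tendsto_const_nhds.sub h1').const_mul 2
  have den : Tendsto (fun n : ℕ => (1 - q) * (1 + q ^ n)) atTop (nhds ((1 - q) * (1 + 0))) :=
    (tendsto_const_nhds.add h1).const_mul (1 - q)
  have hden : (1 - q) * (1 + (0:ℝ)) ≠ 0 := by
    simp only [add_zero, mul_one]; linarith
  have h2 := num.div den hden
  simp only [sub_zero, add_zero, mul_one] at h2
  simpa [qBrace_succ, Pi.div_def] using h2

lemma tendsto_qBrace {q : ℝ} (hq : 0 < q) (hq1 : q ≠ 1) :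
    Tendsto (fun n => qBrace q (n + 1)) atTop (nhds (Rq q)) := by
  rcases hq1.lt_or_gt with h | h
  · rw [Rq, if_pos h]; exact tendsto_qBrace_lt hq h
  · rw [← Rq_inv hq h]
    have hi1 : q⁻¹ < 1 := by rw [inv_lt_one_iff₀]; right; exact h
    have := tendsto_qBrace_lt (inv_pos.mpr hq) hi1
    rw [Rq, if_pos hi1]
    exact this.congr fun n => qBrace_inv hq hq1 n

lemma summable_norm_impExp {q : ℝ} (hq : 0 < q) (hq1 : q ≠ 1) {z w : ℂ}
    (hw : ‖w‖ = ‖z‖) (hz : ‖z‖ < Rq q) (hz0 : z ≠ 0) :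
    Summable fun n => ‖w ^ n / (qBraceFact q n : ℂ)‖ := by
  have hR := Rq_pos hq hq1
  have hw0 : w ≠ 0 := by
    intro h; rw [h, norm_zero] at hw; exact hz0 (norm_eq_zero.mp hw.symm)
  have hzn : ‖z‖ ≠ 0 := norm_ne_zero_iff.mpr hz0
  have hfe : ∀ n, ‖w ^ n / (qBraceFact q n : ℂ)‖ = ‖z‖ ^ n / |qBraceFact q n| := by
    intro n
    rw [norm_div, norm_pow, hw, Complex.norm_real, Real.norm_eq_abs]
  apply summable_of_ratio_test_tendsto_lt_one (l := ‖z‖ / Rq q)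
    ((div_lt_one hR).mpr hz)
  · filter_upwards with n
    rw [hfe n]
    exact (div_ne_zero (pow_ne_zero _ hzn) (abs_ne_zero.mpr (qBraceFact_ne_zero hq hq1 n))).symm
      ∘ Eq.symm
  · have ht : Tendsto (fun n => ‖z‖ / |qBrace q (n + 1)|) atTop (nhds (‖z‖ / |Rq q|)) :=
      tendsto_const_nhds.div (tendsto_qBrace hq hq1).abs (abs_ne_zero.mpr hR.ne')
    rw [abs_of_pos hR] at ht
    apply ht.congr
    intro n
    have hc := qBraceFact_ne_zero hq hq1 n
    have hb := qBrace_ne_zero hq hq1 n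
    rw [Real.norm_eq_abs, Real.norm_eq_abs, hfe, hfe,
      abs_of_nonneg (div_nonneg (pow_nonneg (norm_nonneg z) _) (abs_nonneg _)),
      abs_of_nonneg (div_nonneg (pow_nonneg (norm_nonneg z) _) (abs_nonneg _)),
      qBraceFact_succ, abs_mul]
    have hz' : ‖z‖ ≠ 0 := by simpa using hz0
    field_simp [abs_ne_zero.mpr hc, abs_ne_zero.mpr hb, hz']
    ring

end Aux

/-- For `|z| < R_q`, `𝓔_q(-z) · 𝓔_q(z) = 1`. -/
theorem impExp_neg_mul_impExp (q : ℝ) (hq : 0 < q) (hq1 : q ≠ 1) (z : ℂ)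
    (hz : ‖z‖ < Rq q) : impExp q (-z) * impExp q z = 1 := by
  rcases eq_or_ne z 0 with rfl | hz0
  · have h1 : impExp q 0 = 1 := by
      rw [impExp, tsum_eq_single 0]
      · simp [qBraceFact_zero]
      · intro b hb; simp [zero_pow hb]
    rw [neg_zero, h1, one_mul]
  · have hf := summable_norm_impExp hq hq1 (by simp : ‖(-z : ℂ)‖ = ‖z‖) hz hz0
    have hg := summable_norm_impExp hq hq1 rfl hz hz0
    rw [impExp, impExp, tsum_mul_tsum_eq_tsum_sum_antidiagonal_of_summable_norm hf hg]
    rw [tsum_eq_single 0]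
    · simp [qBraceFact_zero]
    · intro n hn
      have hterm : ∀ kl ∈ Finset.HasAntidiagonal.antidiagonal n,
          (-z) ^ kl.1 / (qBraceFact q kl.1 : ℂ) * (z ^ kl.2 / (qBraceFact q kl.2 : ℂ))
            = ((((-1 : ℝ) ^ kl.1 * (qBraceFact q kl.1)⁻¹) * (qBraceFact q kl.2)⁻¹ : ℝ) : ℂ)
              * z ^ n := by
        rintro ⟨i, j⟩ hij
        rw [Finset.HasAntidiagonal.mem_antidiagonal] at hij
        simp only
        rw [← hij, neg_pow]
        push_cast
        ring
      rw [Finset.sum_congr rfl hterm, ← Finset.sum_mul, ← Complex.ofReal_sum,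
        key_coeff hq hq1 hn]
      simp
end
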